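/- For all integers n, m ≥ 1, the domination polynomial of the n×m rook graph satisfies D_{R_{n,m}}(x) = (1+x)^{nm} − Σ_{r=0}^{n−1} Σ_{c=0}^{m−1} C(n,r) C(m,c) Σ_{k=0}^{c} (−1)^{c−k} C(c,k) ((1+x)^k − 1)^r as an identity in the polynomial ring ℤ[x]. -/

import Mathlib

open Finset Polynomial

/-- The `n × m` rook graph: vertices are squares `(a,b)`; two distinct squares are
adjacent iff they share a row or a column. -/
def rookGraph (n m : ℕ) : SimpleGraph (Fin n × Fin m) where
  Adj v w := v ≠ w ∧ (v.1 = w.1 ∨ v.2 = w.2)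
  symm := by
    refine ⟨?_⟩
    rintro v w ⟨h1, h2⟩
    exact ⟨h1.symm, h2.imp Eq.symm Eq.symm⟩
  loopless := by
    refine ⟨?_⟩
    rintro v ⟨h1, _⟩
    exact h1 rfl

/-- `S` is a dominating set of the `n × m` rook graph. -/
def IsDomSet (n m : ℕ) (S : Finset (Fin n × Fin m)) : Prop :=
  ∀ v, v ∈ S ∨ ∃ u ∈ S, (rookGraph n m).Adj u v

/-- `domCount n m k` is the number of dominating sets of cardinality `k`
of the `n × m` rook graph. -/
noncomputable def domCount (n m k : ℕ) : ℕ :=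
  Set.ncard {S : Finset (Fin n × Fin m) | S.card = k ∧ IsDomSet n m S}

/-- `ECount n m k` is the number of `k`-element subsets of `{1,…,n} × {1,…,m}`
that meet every row and every column. -/
noncomputable def ECount (n m k : ℕ) : ℕ :=
  Set.ncard {T : Finset (Fin n × Fin m) | T.card = k ∧
    (∀ r : Fin n, ∃ c : Fin m, (r, c) ∈ T) ∧ (∀ c : Fin m, ∃ r : Fin n, (r, c) ∈ T)}

/-- The domination polynomial of the `n × m` rook graph, as a polynomial over `ℤ`. -/
noncomputable def domPoly (n m : ℕ) : Polynomial ℤ :=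
  ∑ k ∈ Finset.range (n * m + 1), Polynomial.C (domCount n m k : ℤ) * Polynomial.X ^ k

/-! ### Auxiliary lemmas -/

section Aux

lemma aux_sum_powerset_pow_card {β : Type*} [DecidableEq β] {A : Type*} [CommRing A]
    (x : A) (s : Finset β) :
    ∑ T ∈ s.powerset, x ^ T.card = (1 + x) ^ s.card := by
  have h := Finset.prod_add (fun _ : β => x) (fun _ : β => 1) s
  simp only [prod_const, prod_const_one, mul_one, one_pow] at h
  rw [add_comm 1 x]
  exact h.symm

lemma aux_sum_powerset_neg_one {β : Type*} [DecidableEq β] {A : Type*} [CommRing A]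
    (s : Finset β) :
    ∑ T ∈ s.powerset, (-1 : A) ^ T.card = if s = ∅ then 1 else 0 := by
  have h := Finset.sum_powerset_neg_one_pow_card (x := s)
  calc ∑ T ∈ s.powerset, (-1 : A) ^ T.card
      = ((∑ T ∈ s.powerset, (-1 : ℤ) ^ T.card : ℤ) : A) := by push_cast; ring_nf
    _ = if s = ∅ then 1 else 0 := by rw [h]; split <;> simp

/-- Möbius inversion over the powerset lattice. -/
lemma aux_mobius {β : Type*} [DecidableEq β] {A : Type*} [CommRing A] (q f : Finset β → A)
    (h : ∀ C : Finset β, ∑ K ∈ C.powerset, q K = f C) (C : Finset β) :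
    q C = ∑ K ∈ C.powerset, (-1 : A) ^ (C.card - K.card) * f K := by
  have key : ∀ J ∈ C.powerset,
      (∑ K ∈ C.powerset.filter (fun K => J ⊆ K), (-1 : A) ^ (C.card - K.card))
        = if J = C then 1 else 0 := by
    intro J hJ
    rw [mem_powerset] at hJ
    have h2 : (∑ K ∈ C.powerset.filter (fun K => J ⊆ K), (-1 : A) ^ (C.card - K.card))
        = ∑ K' ∈ (C \ J).powerset, (-1 : A) ^ K'.card := by
      refine Finset.sum_nbij' (fun K => C \ K) (fun K' => C \ K') ?_ ?_ ?_ ?_ ?_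
      · intro K hK
        simp only [mem_filter, mem_powerset] at hK
        exact mem_powerset.2 (sdiff_subset_sdiff le_rfl hK.2)
      · intro K' hK'
        simp only [mem_powerset] at hK'
        simp only [mem_filter, mem_powerset]
        refine ⟨sdiff_subset, subset_sdiff.2 ⟨hJ, ?_⟩⟩
        exact Finset.disjoint_left.2 fun a haJ haK' => (mem_sdiff.1 (hK' haK')).2 haJ
      · intro K hK
        simp only [mem_filter, mem_powerset] at hK
        exact Finset.sdiff_sdiff_eq_self hK.1
      · intro K' hK'
        simp only [mem_powerset] at hK'
        exact Finset.sdiff_sdiff_eq_self (hK'.trans sdiff_subset)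
      · intro K hK
        simp only [mem_filter, mem_powerset] at hK
        rw [card_sdiff_of_subset hK.1]
    rw [h2, aux_sum_powerset_neg_one]
    have h3 : C \ J = ∅ ↔ J = C := by
      rw [Finset.sdiff_eq_empty_iff_subset]
      exact ⟨fun h' => le_antisymm hJ h', fun h' => h' ▸ le_rfl⟩
    simp only [h3]
  have h1 : ∑ J ∈ C.powerset, (if J = C then 1 else 0) * q J = q C := by
    simp only [ite_mul, one_mul, zero_mul, Finset.sum_ite_eq']
    simp
  calc q C = ∑ J ∈ C.powerset, (if J = C then 1 else 0) * q J := h1.symm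
    _ = ∑ J ∈ C.powerset,
          (∑ K ∈ C.powerset.filter (fun K => J ⊆ K), (-1 : A) ^ (C.card - K.card)) * q J := by
        refine Finset.sum_congr rfl fun J hJ => ?_
        rw [key J hJ]
    _ = ∑ K ∈ C.powerset, (-1 : A) ^ (C.card - K.card) * f K := by
        simp_rw [Finset.sum_mul, Finset.sum_filter]
        rw [Finset.sum_comm]
        refine Finset.sum_congr rfl fun K hK => ?_
        rw [mem_powerset] at hK
        rw [← Finset.sum_filter]
        have hfil : C.powerset.filter (fun J => J ⊆ K) = K.powerset := by
          ext J; simp only [mem_filter, mem_powerset]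
          exact ⟨fun h' => h'.2, fun h' => ⟨h'.trans hK, h'⟩⟩
        rw [hfil, ← Finset.mul_sum, h K]

/-- Summing a cardinality-dependent quantity over proper subsets of `univ`. -/
lemma aux_sum_proper {α : Type*} [Fintype α] [DecidableEq α] {M : Type*} [AddCommMonoid M]
    (F : ℕ → M) :
    ∑ S ∈ (univ : Finset α).powerset.filter (fun S => S ≠ univ), F S.card
      = ∑ k ∈ Finset.range (Fintype.card α), (Fintype.card α).choose k • F k := by
  rw [Finset.sum_filter]
  have h1 : ∀ S ∈ (univ : Finset α).powerset,
      (if S ≠ univ then F S.card else 0)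
        = (fun k => if k = Fintype.card α then (0 : M) else F k) S.card := by
    intro S _
    by_cases hS : S = univ
    · simp [hS, Finset.card_univ]
    · have : S.card ≠ Fintype.card α := fun hc => hS ((Finset.card_eq_iff_eq_univ S).1 hc)
      simp [hS, this]
  have h2 := Finset.sum_powerset_apply_card
    (fun k => if k = Fintype.card α then (0 : M) else F k) (x := (univ : Finset α))
  rw [Finset.sum_congr rfl h1, h2, Finset.card_univ, Finset.sum_range_succ]
  simp
  refine Finset.sum_congr rfl fun k hk => ?_
  rw [Finset.mem_range] at hk
  rw [if_neg hk.ne]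

end Aux

section G
variable {n m : ℕ}

/-- The weight (generating monomial) of a row-function. -/
noncomputable def wt (g : Fin n → Finset (Fin m)) : Polynomial ℤ :=
  ∏ a, Polynomial.X ^ (g a).card

/-- The set of nonempty rows. -/
def rowsOf (g : Fin n → Finset (Fin m)) : Finset (Fin n) := univ.filter (fun a => g a ≠ ∅)

/-- The set of occupied columns. -/
def colsOf (g : Fin n → Finset (Fin m)) : Finset (Fin m) := univ.biUnion g

/-- Row-functions with nonempty rows exactly `R` and columns inside `C`. -/
def Dset (R : Finset (Fin n)) (C : Finset (Fin m)) : Finset (Fin n → Finset (Fin m)) :=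
  Fintype.piFinset (fun a => if a ∈ R then C.powerset.erase ∅ else {∅})

lemma mem_Dset {R : Finset (Fin n)} {C : Finset (Fin m)} {g : Fin n → Finset (Fin m)} :
    g ∈ Dset R C ↔ rowsOf g = R ∧ ∀ a, g a ⊆ C := by
  rw [Dset, Fintype.mem_piFinset]
  constructor
  · intro h
    constructor
    · ext a
      specialize h a
      by_cases ha : a ∈ R <;> simp [ha, rowsOf] at h ⊢
      · exact h.1
      · exact h
    · intro a
      specialize h a
      by_cases ha : a ∈ R <;> simp [ha] at h
      · exact h.2
      · simp [h]
  · rintro ⟨hR, hC⟩ a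
    by_cases ha : a ∈ R <;> simp [ha]
    · have : g a ≠ ∅ := by
        rw [← hR] at ha; simpa [rowsOf] using ha
      exact ⟨this, hC a⟩
    · rw [← hR] at ha; simpa [rowsOf] using ha

lemma sum_Dset (R : Finset (Fin n)) (C : Finset (Fin m)) :
    ∑ g ∈ Dset R C, wt g =
      ((1 + Polynomial.X) ^ C.card - 1 : Polynomial ℤ) ^ R.card := by
  unfold Dset wt
  rw [← Finset.prod_univ_sum (fun a => if a ∈ R then C.powerset.erase ∅ else {∅})
      (fun _ T => (Polynomial.X : Polynomial ℤ) ^ T.card)]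
  have h1 : ∀ a : Fin n,
      (∑ T ∈ (if a ∈ R then C.powerset.erase ∅ else {∅}), (Polynomial.X : Polynomial ℤ) ^ T.card)
      = if a ∈ R then ((1 + Polynomial.X) ^ C.card - 1) else 1 := by
    intro a
    by_cases ha : a ∈ R <;> simp only [ha, if_true, if_false]
    · rw [Finset.sum_erase_eq_sub (empty_mem_powerset C), aux_sum_powerset_pow_card,
        card_empty, pow_zero]
    · simp
  calc (∏ a : Fin n, ∑ T ∈ (if a ∈ R then C.powerset.erase ∅ else {∅}),
          (Polynomial.X : Polynomial ℤ) ^ T.card)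
      = ∏ a : Fin n, (if a ∈ R then ((1 + Polynomial.X) ^ C.card - 1 : Polynomial ℤ) else 1) := by
        exact Finset.prod_congr rfl fun a _ => h1 a
    _ = ∏ a ∈ univ.filter (fun a => a ∈ R), ((1 + Polynomial.X) ^ C.card - 1 : Polynomial ℤ) := by
        rw [Finset.prod_filter]
    _ = ((1 + Polynomial.X) ^ C.card - 1 : Polynomial ℤ) ^ R.card := by
        have : univ.filter (fun a => a ∈ R) = R := by ext a; simp
        rw [this, prod_const]

/-- Generating polynomial of row-functions with rows exactly `R`, columns exactly `C`. -/
noncomputable def Qp (R : Finset (Fin n)) (C : Finset (Fin m)) : Polynomial ℤ :=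
  ∑ g ∈ univ.filter (fun g => rowsOf g = R ∧ colsOf g = C), wt g

/-- The inner inclusion–exclusion polynomial. -/
noncomputable def Epoly (r c : ℕ) : Polynomial ℤ :=
  ∑ k ∈ Finset.range (c + 1),
    (-1 : Polynomial ℤ) ^ (c - k) * Polynomial.C (c.choose k : ℤ) *
      ((1 + Polynomial.X) ^ k - 1) ^ r

lemma sum_Qp_powerset (R : Finset (Fin n)) (C : Finset (Fin m)) :
    ∑ K ∈ C.powerset, Qp R K = ((1 + Polynomial.X) ^ C.card - 1 : Polynomial ℤ) ^ R.card := by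
  rw [← sum_Dset R C]
  rw [← Finset.sum_fiberwise_of_maps_to (g := colsOf) (t := C.powerset) ?_ wt]
  · refine Finset.sum_congr rfl fun K hK => ?_
    rw [mem_powerset] at hK
    unfold Qp
    refine Finset.sum_congr ?_ (fun _ _ => rfl)
    ext g
    simp only [mem_filter, mem_Dset, mem_univ, true_and]
    constructor
    · intro h
      refine ⟨⟨h.1, fun a b hb => ?_⟩, h.2⟩
      exact hK (h.2 ▸ (Finset.mem_biUnion.2 ⟨a, mem_univ a, hb⟩))
    · exact fun h => ⟨h.1.1, h.2⟩
  · intro g hg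
    rw [mem_Dset] at hg
    exact mem_powerset.2 (Finset.biUnion_subset.2 fun a _ => hg.2 a)

lemma Qp_eq (R : Finset (Fin n)) (C : Finset (Fin m)) :
    Qp R C = Epoly R.card C.card := by
  have h := aux_mobius (Qp R)
    (fun K => ((1 + Polynomial.X) ^ K.card - 1 : Polynomial ℤ) ^ R.card)
    (fun K => sum_Qp_powerset R K) C
  rw [h]
  rw [Finset.sum_powerset_apply_card
    (fun k => (-1 : Polynomial ℤ) ^ (C.card - k) * ((1 + Polynomial.X) ^ k - 1) ^ R.card)]
  unfold Epoly
  refine Finset.sum_congr rfl fun k _ => ?_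
  rw [nsmul_eq_mul, map_natCast]
  ring

/-- The generating polynomial of non-dominating row-functions. -/
lemma sum_nondom (n m : ℕ) :
    ∑ g ∈ (univ : Finset (Fin n → Finset (Fin m))).filter
        (fun g => rowsOf g ≠ univ ∧ colsOf g ≠ univ), wt g
      = ∑ r ∈ Finset.range n, ∑ c ∈ Finset.range m,
          Polynomial.C (n.choose r : ℤ) * Polynomial.C (m.choose c : ℤ) * Epoly r c := by
  classical
  -- fiber over the exact row set
  rw [← Finset.sum_fiberwise_of_maps_to (g := rowsOf)
      (t := (univ : Finset (Fin n)).powerset.filter (fun R => R ≠ univ)) ?_ wt]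
  · have inner : ∀ R ∈ (univ : Finset (Fin n)).powerset.filter (fun R => R ≠ univ),
        (∑ g ∈ ((univ : Finset (Fin n → Finset (Fin m))).filter
            (fun g => rowsOf g ≠ univ ∧ colsOf g ≠ univ)).filter (fun g => rowsOf g = R), wt g)
        = ∑ C ∈ (univ : Finset (Fin m)).powerset.filter (fun C => C ≠ univ),
            Epoly R.card C.card := by
      intro R hR
      rw [mem_filter] at hR
      have hfib : ((univ : Finset (Fin n → Finset (Fin m))).filter
            (fun g => rowsOf g ≠ univ ∧ colsOf g ≠ univ)).filter (fun g => rowsOf g = R)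
          = (univ : Finset (Fin n → Finset (Fin m))).filter
            (fun g => rowsOf g = R ∧ colsOf g ≠ univ) := by
        ext g
        simp only [mem_filter, mem_univ, true_and]
        constructor
        · exact fun h => ⟨h.2, h.1.2⟩
        · exact fun h => ⟨⟨h.1 ▸ hR.2, h.2⟩, h.1⟩
      rw [hfib]
      rw [← Finset.sum_fiberwise_of_maps_to (g := colsOf)
          (t := (univ : Finset (Fin m)).powerset.filter (fun C => C ≠ univ)) ?_ wt]
      · refine Finset.sum_congr rfl fun C hC => ?_
        rw [mem_filter] at hC
        rw [← Qp_eq]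
        unfold Qp
        refine Finset.sum_congr ?_ (fun _ _ => rfl)
        ext g
        simp only [mem_filter, mem_univ, true_and]
        constructor
        · exact fun h => ⟨h.1.1, h.2⟩
        · exact fun h => ⟨⟨h.1, h.2 ▸ hC.2⟩, h.2⟩
      · intro g hg
        rw [mem_filter] at hg
        exact mem_filter.2 ⟨mem_powerset.2 (subset_univ _), hg.2.2⟩
    rw [Finset.sum_congr rfl inner]
    -- now convert both filtered powerset sums to range sums
    have hsum2 : ∀ r : ℕ,
        (∑ C ∈ (univ : Finset (Fin m)).powerset.filter (fun C => C ≠ univ), Epoly r C.card)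
        = ∑ c ∈ Finset.range m, (m.choose c) • Epoly r c := by
      intro r
      have := aux_sum_proper (α := Fin m) (fun c => Epoly r c)
      simpa [Fintype.card_fin] using this
    have step : (∑ R ∈ (univ : Finset (Fin n)).powerset.filter (fun R => R ≠ univ),
        ∑ C ∈ (univ : Finset (Fin m)).powerset.filter (fun C => C ≠ univ), Epoly R.card C.card)
        = ∑ r ∈ Finset.range n, (n.choose r) •
            ∑ c ∈ Finset.range m, (m.choose c) • Epoly r c := by
      have := aux_sum_proper (α := Fin n)
        (fun r => ∑ c ∈ Finset.range m, (m.choose c) • Epoly r c)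
      rw [Fintype.card_fin] at this
      rw [← this]
      exact Finset.sum_congr rfl fun R _ => hsum2 R.card
    rw [step]
    refine Finset.sum_congr rfl fun r _ => ?_
    rw [Finset.smul_sum]
    refine Finset.sum_congr rfl fun c _ => ?_
    rw [smul_smul, nsmul_eq_mul]
    push_cast
    try rw [map_natCast, map_natCast]
    try ring
  · intro g hg
    rw [mem_filter] at hg
    exact mem_filter.2 ⟨mem_powerset.2 (subset_univ _), hg.2.1⟩

/-! ### Bridge between subsets of the grid and row-functions -/

def toF (g : Fin n → Finset (Fin m)) : Finset (Fin n × Fin m) :=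
  univ.filter (fun p => p.2 ∈ g p.1)

def toG (S : Finset (Fin n × Fin m)) : Fin n → Finset (Fin m) :=
  fun a => univ.filter (fun b => (a, b) ∈ S)

lemma toG_toF (g : Fin n → Finset (Fin m)) : toG (toF g) = g := by
  funext a; ext b; simp [toG, toF]

lemma toF_toG (S : Finset (Fin n × Fin m)) : toF (toG S) = S := by
  ext p; simp [toG, toF]

lemma card_toF (g : Fin n → Finset (Fin m)) : (toF g).card = ∑ a, (g a).card := by
  rw [Finset.card_eq_sum_card_fiberwise (f := Prod.fst) (t := univ) (fun x _ => mem_univ _)]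
  refine Finset.sum_congr rfl fun a _ => ?_
  have : (toF g).filter (fun p => p.1 = a)
      = (g a).map ⟨fun b => (a, b), fun b b' h => (Prod.ext_iff.1 h).2⟩ := by
    ext p
    simp only [toF, mem_filter, mem_univ, true_and, Finset.mem_map,
      Function.Embedding.coeFn_mk]
    constructor
    · rintro ⟨hp, rfl⟩
      exact ⟨p.2, hp, rfl⟩
    · rintro ⟨b, hb, rfl⟩
      exact ⟨hb, rfl⟩
  rw [this, Finset.card_map]

lemma wt_eq (g : Fin n → Finset (Fin m)) : wt g = Polynomial.X ^ (toF g).card := by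
  rw [card_toF, wt, Finset.prod_pow_eq_pow_sum]

lemma isDomSet_iff (S : Finset (Fin n × Fin m)) :
    IsDomSet n m S ↔ ∀ v : Fin n × Fin m, ∃ u ∈ S, u.1 = v.1 ∨ u.2 = v.2 := by
  constructor
  · intro h v
    rcases h v with hv | ⟨u, hu, _, hadj⟩
    · exact ⟨v, hv, Or.inl rfl⟩
    · exact ⟨u, hu, hadj⟩
  · intro h v
    rcases h v with ⟨u, hu, hor⟩
    by_cases huv : u = v
    · exact Or.inl (huv ▸ hu)
    · exact Or.inr ⟨u, hu, huv, hor⟩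

lemma isDomSet_toF (g : Fin n → Finset (Fin m)) :
    IsDomSet n m (toF g) ↔ (rowsOf g = univ ∨ colsOf g = univ) := by
  rw [isDomSet_iff]
  have hrows : rowsOf g = univ ↔ ∀ a, g a ≠ ∅ := by
    rw [Finset.eq_univ_iff_forall]; simp [rowsOf]
  have hcols : colsOf g = univ ↔ ∀ b, ∃ a, b ∈ g a := by
    rw [Finset.eq_univ_iff_forall]; simp [colsOf]
  rw [hrows, hcols]
  constructor
  · intro h
    by_contra hcon
    push_neg at hcon
    obtain ⟨⟨a0, ha0⟩, b0, hb0⟩ := hcon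
    rcases h (a0, b0) with ⟨u, hu, hor⟩
    rw [toF, mem_filter] at hu
    have hu2 := hu.2
    rcases hor with h1 | h2
    · rw [h1, show (a0, b0).1 = a0 from rfl, ha0] at hu2
      exact absurd hu2 (Finset.notMem_empty _)
    · rw [h2] at hu2
      exact hb0 u.1 hu2
  · rintro (h | h) v
    · obtain ⟨b, hb⟩ := Finset.nonempty_iff_ne_empty.2 (h v.1)
      exact ⟨(v.1, b), by simp [toF, hb], Or.inl rfl⟩
    · obtain ⟨a, ha⟩ := h v.2
      exact ⟨(a, v.2), by simp [toF, ha], Or.inr rfl⟩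

end G

section Final
attribute [local instance] Classical.propDecidable
variable {n m : ℕ}

lemma sum_nondom_S (n m : ℕ) :
    ∑ S ∈ (univ : Finset (Finset (Fin n × Fin m))).filter (fun S => ¬ IsDomSet n m S),
        (Polynomial.X : Polynomial ℤ) ^ S.card
      = ∑ g ∈ (univ : Finset (Fin n → Finset (Fin m))).filter
          (fun g => rowsOf g ≠ univ ∧ colsOf g ≠ univ), wt g := by
  refine Finset.sum_nbij' toG toF ?_ ?_ ?_ ?_ ?_
  · intro S hS
    rw [mem_filter] at hS
    have h := (isDomSet_toF (toG S))
    rw [toF_toG] at h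
    have h2 : ¬ (rowsOf (toG S) = univ ∨ colsOf (toG S) = univ) := fun hc => hS.2 (h.2 hc)
    push_neg at h2
    exact mem_filter.2 ⟨mem_univ _, h2⟩
  · intro g hg
    rw [mem_filter] at hg
    refine mem_filter.2 ⟨mem_univ _, fun hd => ?_⟩
    rcases (isDomSet_toF g).1 hd with h | h
    · exact hg.2.1 h
    · exact hg.2.2 h
  · intro S _; exact toF_toG S
  · intro g _; exact toG_toF g
  · intro S _
    rw [wt_eq (toG S), toF_toG]

lemma domPoly_eq (n m : ℕ) :
    domPoly n m = ∑ S ∈ (univ : Finset (Finset (Fin n × Fin m))).filter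
        (fun S => IsDomSet n m S), (Polynomial.X : Polynomial ℤ) ^ S.card := by
  have hc : ∀ k, domCount n m k
      = ((univ : Finset (Finset (Fin n × Fin m))).filter
          (fun S => S.card = k ∧ IsDomSet n m S)).card := by
    intro k
    rw [domCount, show {S : Finset (Fin n × Fin m) | S.card = k ∧ IsDomSet n m S}
      = ↑((univ : Finset (Finset (Fin n × Fin m))).filter
          (fun S => S.card = k ∧ IsDomSet n m S)) from by ext S; simp]
    exact Set.ncard_coe_finset _
  have hmaps : ∀ S ∈ (univ : Finset (Finset (Fin n × Fin m))).filter
      (fun S => IsDomSet n m S), S.card ∈ Finset.range (n * m + 1) := by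
    intro S _
    rw [Finset.mem_range, Nat.lt_succ_iff]
    calc S.card ≤ (univ : Finset (Fin n × Fin m)).card := Finset.card_le_univ S
      _ = n * m := by rw [Finset.card_univ, Fintype.card_prod, Fintype.card_fin, Fintype.card_fin]
  rw [domPoly, ← Finset.sum_fiberwise_of_maps_to hmaps
      (fun S => (Polynomial.X : Polynomial ℤ) ^ S.card)]
  refine Finset.sum_congr rfl fun k _ => ?_
  have hfib : ((univ : Finset (Finset (Fin n × Fin m))).filter
        (fun S => IsDomSet n m S)).filter (fun S => S.card = k)
      = (univ : Finset (Finset (Fin n × Fin m))).filter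
        (fun S => S.card = k ∧ IsDomSet n m S) := by
    ext S
    simp only [mem_filter, mem_univ, true_and]
    exact ⟨fun h => ⟨h.2, h.1⟩, fun h => ⟨h.2, h.1⟩⟩
  have : ∑ S ∈ ((univ : Finset (Finset (Fin n × Fin m))).filter
        (fun S => IsDomSet n m S)).filter (fun S => S.card = k),
      (Polynomial.X : Polynomial ℤ) ^ S.card
      = ∑ S ∈ ((univ : Finset (Finset (Fin n × Fin m))).filter
        (fun S => IsDomSet n m S)).filter (fun S => S.card = k),
      (Polynomial.X : Polynomial ℤ) ^ k := by
    refine Finset.sum_congr rfl fun S hS => ?_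
    rw [mem_filter] at hS
    rw [hS.2]
  rw [this, Finset.sum_const, hfib, ← hc k, nsmul_eq_mul, map_natCast]

end Final

/-- Intermediate form (eq. (10) in the paper) of the domination polynomial. -/
theorem rook_domination_polynomial_form10 (n m : ℕ) (hn : 1 ≤ n) (hm : 1 ≤ m) :
    domPoly n m =
      (1 + Polynomial.X) ^ (n * m) -
        ∑ r ∈ Finset.range n, ∑ c ∈ Finset.range m,
          Polynomial.C (n.choose r : ℤ) * Polynomial.C (m.choose c : ℤ) *
            ∑ k ∈ Finset.range (c + 1),
              (-1 : Polynomial ℤ) ^ (c - k) * Polynomial.C (c.choose k : ℤ) *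
                ((1 + Polynomial.X) ^ k - 1) ^ r := by
  classical
  have hB : ((1 + Polynomial.X : Polynomial ℤ)) ^ (n * m)
      = ∑ S ∈ (univ : Finset (Finset (Fin n × Fin m))), (Polynomial.X : Polynomial ℤ) ^ S.card := by
    rw [← Finset.powerset_univ, aux_sum_powerset_pow_card, Finset.card_univ,
      Fintype.card_prod, Fintype.card_fin, Fintype.card_fin]
  have hsplit := Finset.sum_filter_add_sum_filter_not
    (univ : Finset (Finset (Fin n × Fin m))) (fun S => IsDomSet n m S)
    (fun S => (Polynomial.X : Polynomial ℤ) ^ S.card)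
  have hRHS : (∑ r ∈ Finset.range n, ∑ c ∈ Finset.range m,
          Polynomial.C (n.choose r : ℤ) * Polynomial.C (m.choose c : ℤ) *
            ∑ k ∈ Finset.range (c + 1),
              (-1 : Polynomial ℤ) ^ (c - k) * Polynomial.C (c.choose k : ℤ) *
                ((1 + Polynomial.X) ^ k - 1) ^ r)
      = ∑ S ∈ (univ : Finset (Finset (Fin n × Fin m))).filter (fun S => ¬ IsDomSet n m S),
          (Polynomial.X : Polynomial ℤ) ^ S.card := by
    rw [sum_nondom_S]
    rw [sum_nondom n m]
    rfl
  rw [domPoly_eq, hRHS, eq_sub_iff_add_eq, hsplit, hB]
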